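/- Let Γ be a distance-biregular graph, ℓ ∈ {0,1}, and y ∈ V_ℓ. Then the capacity satisfies cap(y) = Σ_{x∈V} ν^y(x) = Σ_{j=1}^{D_ℓ} (n − B_{ℓ,j−1})² / (k_{ℓ,j}·c_{ℓ,j}). -/

import Mathlib

open Finset SimpleGraph

theorem stmt12 {V : Type} [Fintype V] [DecidableEq V]
    (G : SimpleGraph V) [DecidableRel G.Adj]
    (hconn : G.Connected) (hcard : 2 ≤ Fintype.card V)
    (σ : V → Fin 2)
    (hbip : ∀ x y : V, G.Adj x y → σ x ≠ σ y)
    (k : Fin 2 → ℕ)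
    (hdeg : ∀ x : V, G.degree x = k (σ x))
    (c b : Fin 2 → ℕ → ℕ)
    (hc : ∀ (x y : V) (i : ℕ), G.dist x y = i →
      (Finset.univ.filter (fun z => G.dist x z = i - 1 ∧ G.Adj y z)).card = c (σ x) i)
    (hb : ∀ (x y : V) (i : ℕ), G.dist x y = i →
      (Finset.univ.filter (fun z => G.dist x z = i + 1 ∧ G.Adj y z)).card = b (σ x) i)
    (D : Fin 2 → ℕ)
    (hDub : ∀ x y : V, G.dist x y ≤ D (σ x))
    (hDmax : ∀ ℓ : Fin 2, ∃ x y : V, σ x = ℓ ∧ G.dist x y = D ℓ)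
    (hD0 : 1 ≤ D 0) (hD01 : D 0 ≤ D 1)
    (kk : Fin 2 → ℕ → ℕ)
    (hkk : ∀ (x : V) (i : ℕ),
      (Finset.univ.filter (fun y => G.dist x y = i)).card = kk (σ x) i)
    (ν : V → V → ℝ)
    (hν0 : ∀ x : V, ν x x = 0)
    (hνL : ∀ x y : V, y ≠ x →
      (G.degree y : ℝ) * ν x y - ∑ z ∈ G.neighborFinset y, ν x z = 1) :
    ∀ y : V,
      ∑ x : V, ν y x = ∑ j ∈ Finset.Icc 1 (D (σ y)),
        ((Fintype.card V : ℝ) - ∑ t ∈ Finset.range j, (kk (σ y) t : ℝ)) ^ 2 /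
          ((kk (σ y) j : ℝ) * (c (σ y) j : ℝ)) := by
  intro y
  -- abbreviations
  set ℓ := σ y with hℓ
  set Dl := D ℓ with hDldef
  set A : ℕ → Finset V := fun i => Finset.univ.filter (fun x => G.dist y x = i) with hA
  set S : ℕ → ℝ := fun i => ∑ x ∈ A i, ν y x with hS
  have hmemA : ∀ (i : ℕ) (x : V), x ∈ A i ↔ G.dist y x = i := by
    intro i x; simp [hA]
  have hcardA : ∀ i : ℕ, (A i).card = kk ℓ i := by
    intro i; rw [hA]; exact hkk y i
  -- parity along walks
  have parwalk : ∀ (a z : V) (w : G.Walk a z), (σ a = σ z ↔ Even w.length) := by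
    intro a z w
    induction w with
    | nil => simp
    | @cons u v z h p ih =>
      have hne : σ u ≠ σ v := hbip u v h
      simp only [SimpleGraph.Walk.length_cons, Nat.even_add_one]
      constructor
      · intro he hev
        have : σ v = σ z := ih.mpr hev
        exact hne (he.trans this.symm)
      · intro hnev
        have hvz : σ v ≠ σ z := fun hh => hnev (ih.mp hh)
        revert hne hvz
        have : ∀ p q r : Fin 2, p ≠ q → ¬(q = r) → p = r := by decide
        exact fun h1 h2 => this (σ u) (σ v) (σ z) h1 h2
  have par : ∀ z : V, (σ y = σ z ↔ Even (G.dist y z)) := by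
    intro z
    obtain ⟨w, hw⟩ := (hconn y z).exists_walk_length_eq_dist
    rw [← hw]; exact parwalk y z w
  -- adjacent vertices have distances differing by one
  have hadjd : ∀ x z : V, G.Adj x z →
      G.dist y z = G.dist y x + 1 ∨ G.dist y x = G.dist y z + 1 := by
    intro x z ha
    have hxz1 : G.dist x z = 1 := SimpleGraph.dist_eq_one_iff_adj.mpr ha
    have hzx1 : G.dist z x = 1 := SimpleGraph.dist_eq_one_iff_adj.mpr ha.symm
    have h1 : G.dist y z ≤ G.dist y x + 1 := by
      have := hconn.dist_triangle (u := y) (v := x) (w := z)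
      omega
    have h2 : G.dist y x ≤ G.dist y z + 1 := by
      have := hconn.dist_triangle (u := y) (v := z) (w := x)
      omega
    have hne : G.dist y x ≠ G.dist y z := by
      intro he
      have p1 := par x
      have p2 := par z
      rw [he] at p1
      have hxz : σ x ≠ σ z := hbip x z ha
      by_cases hp : Even (G.dist y z)
      · exact hxz ((p1.mpr hp).symm.trans (p2.mpr hp))
      · have h1' : σ y ≠ σ x := fun hh => hp (p1.mp hh)
        have h2' : σ y ≠ σ z := fun hh => hp (p2.mp hh)
        have : ∀ p q r : Fin 2, p ≠ q → p ≠ r → q = r := by decide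
        exact hxz (this (σ y) (σ x) (σ z) h1' h2')
    omega
  -- predecessor along geodesics
  have hpred : ∀ (z : V) (j : ℕ), G.dist y z = j + 1 →
      ∃ w : V, G.dist y w = j ∧ G.Adj w z := by
    intro z j hz
    have hne0 : G.dist y z ≠ 0 := by omega
    obtain ⟨p, hp⟩ := SimpleGraph.exists_walk_of_dist_ne_zero hne0
    have hzy : z ≠ y := by
      intro h; subst h; rw [SimpleGraph.dist_self] at hz; omega
    obtain ⟨w, ha, q, hq⟩ := SimpleGraph.Walk.exists_eq_cons_of_ne hzy p.reverse
    have hlq : q.length = j := by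
      have h1 : p.reverse.length = j + 1 := by
        rw [SimpleGraph.Walk.length_reverse, hp, hz]
      rw [hq, SimpleGraph.Walk.length_cons] at h1
      omega
    refine ⟨w, ?_, ha.symm⟩
    have hle : G.dist y w ≤ j := by
      rw [SimpleGraph.dist_comm]
      calc G.dist w y ≤ q.length := SimpleGraph.dist_le q
        _ = j := hlq
    have hge : j + 1 ≤ G.dist y w + 1 := by
      have hwz : G.dist w z = 1 := SimpleGraph.dist_eq_one_iff_adj.mpr ha.symm
      have := hconn.dist_triangle (u := y) (v := w) (w := z)
      omega
    omega
  -- existence of vertices at every distance up to Dl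
  have hexD : ∃ z : V, G.dist y z = Dl := by
    obtain ⟨x0, y0, hx0, hy0⟩ := hDmax ℓ
    have h1 : 1 ≤ kk ℓ Dl := by
      rw [← hx0, ← hkk x0 Dl]
      have : y0 ∈ Finset.univ.filter (fun v => G.dist x0 v = D (σ x0)) := by
        simp [hy0, hx0]
      calc 1 ≤ ({y0} : Finset V).card := by simp
        _ ≤ _ := Finset.card_le_card (by
            intro v hv; simp at hv; subst hv
            simp [hy0, hx0, hDldef])
    have h2 : 1 ≤ (A Dl).card := by rw [hcardA]; exact h1
    obtain ⟨z, hz⟩ := Finset.card_pos.mp h2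
    exact ⟨z, (hmemA Dl z).mp hz⟩
  have hexists : ∀ j, j ≤ Dl → ∃ z : V, G.dist y z = j := by
    have key : ∀ m j, j + m = Dl → ∃ z : V, G.dist y z = j := by
      intro m
      induction m with
      | zero =>
        intro j hj
        obtain rfl : j = Dl := by omega
        exact hexD
      | succ m ih =>
        intro j hj
        obtain ⟨z, hz⟩ := ih (j + 1) (by omega)
        obtain ⟨w, hw, _⟩ := hpred z j hz
        exact ⟨w, hw⟩
    intro j hj
    exact key (Dl - j) j (by omega)
  have kkpos : ∀ j, j ≤ Dl → 1 ≤ kk ℓ j := by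
    intro j hj
    obtain ⟨z, hz⟩ := hexists j hj
    rw [← hcardA]
    exact Finset.card_pos.mpr ⟨z, (hmemA j z).mpr hz⟩
  have cpos : ∀ j, 1 ≤ j → j ≤ Dl → 1 ≤ c ℓ j := by
    intro j h1 h2
    obtain ⟨z, hz⟩ := hexists j h2
    have hz' : G.dist y z = (j - 1) + 1 := by omega
    obtain ⟨w, hw, haw⟩ := hpred z (j - 1) hz'
    rw [← hc y z j hz]
    refine Finset.card_pos.mpr ⟨w, ?_⟩
    simp [hw, haw.symm]
  -- b at the top level vanishes
  have bD0 : b ℓ Dl = 0 := by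
    obtain ⟨z, hz⟩ := hexD
    rw [← hb y z Dl hz]
    convert Finset.card_empty
    ext x
    simp only [Finset.mem_filter, Finset.mem_univ, true_and, Finset.notMem_empty, iff_false]
    rintro ⟨hd, -⟩
    have := hDub y x
    rw [← hℓ] at this
    omega
  -- total count
  have htot : ∑ t ∈ Finset.range (Dl + 1), kk ℓ t = Fintype.card V := by
    have hmap : ∀ x ∈ (Finset.univ : Finset V),
        G.dist y x ∈ Finset.range (Dl + 1) := by
      intro x _
      have := hDub y x
      rw [← hℓ] at this
      simp; omega
    have := Finset.card_eq_sum_card_fiberwise hmap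
    rw [Finset.card_univ] at this
    rw [this]
    exact Finset.sum_congr rfl fun t _ => (hkk y t).symm
  have hStop : S (Dl + 1) = 0 := by
    rw [hS]
    have : A (Dl + 1) = ∅ := by
      ext x
      simp only [hmemA, Finset.notMem_empty, iff_false]
      have := hDub y x
      rw [← hℓ] at this
      omega
    simp [this]
  -- the basic level equation
  have Ei : ∀ i : ℕ, 1 ≤ i →
      ((c ℓ i : ℝ) + (b ℓ i : ℝ)) * S i
        = (b ℓ (i - 1) : ℝ) * S (i - 1) + (c ℓ (i + 1) : ℝ) * S (i + 1) + (kk ℓ i : ℝ) := by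
    intro i hi
    have hsum1 : ∑ x ∈ A i, ((G.degree x : ℝ) * ν y x - ∑ z ∈ G.neighborFinset x, ν y z)
        = (kk ℓ i : ℝ) := by
      have h1 : ∀ x ∈ A i,
          ((G.degree x : ℝ) * ν y x - ∑ z ∈ G.neighborFinset x, ν y z) = 1 := by
        intro x hx
        have hd := (hmemA i x).mp hx
        have hxy : x ≠ y := by
          intro h; subst h; rw [SimpleGraph.dist_self] at hd; omega
        exact hνL y x hxy
      rw [Finset.sum_congr rfl h1, Finset.sum_const, hcardA]
      simp
    have hdegx : ∀ x ∈ A i, (G.degree x : ℝ) = (c ℓ i : ℝ) + (b ℓ i : ℝ) := by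
      intro x hx
      have hd := (hmemA i x).mp hx
      have hsplit : (Finset.univ.filter (G.Adj x)) =
          (Finset.univ.filter (fun z => G.dist y z = i - 1 ∧ G.Adj x z)) ∪
          (Finset.univ.filter (fun z => G.dist y z = i + 1 ∧ G.Adj x z)) := by
        ext z
        simp only [Finset.mem_filter, Finset.mem_union, Finset.mem_univ, true_and]
        constructor
        · intro ha
          rcases hadjd x z ha with h | h
          · right; exact ⟨by omega, ha⟩
          · left; exact ⟨by omega, ha⟩
        · rintro (⟨-, ha⟩ | ⟨-, ha⟩) <;> exact ha
      have hdisj : Disjoint (Finset.univ.filter (fun z => G.dist y z = i - 1 ∧ G.Adj x z))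
          (Finset.univ.filter (fun z => G.dist y z = i + 1 ∧ G.Adj x z)) := by
        rw [Finset.disjoint_left]
        intro z hz1 hz2
        simp only [Finset.mem_filter] at hz1 hz2
        omega
      have hdval : G.degree x = c ℓ i + b ℓ i := by
        rw [SimpleGraph.degree, SimpleGraph.neighborFinset_eq_filter, hsplit,
          Finset.card_union_of_disjoint hdisj, hc y x i hd, hb y x i hd]
      rw [hdval]; push_cast; ring
    have hdegsum : ∑ x ∈ A i, (G.degree x : ℝ) * ν y x
        = ((c ℓ i : ℝ) + (b ℓ i : ℝ)) * S i := by
      simp only [hS, Finset.mul_sum]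
      exact Finset.sum_congr rfl fun x hx => by rw [hdegx x hx]
    have hnbr : ∑ x ∈ A i, ∑ z ∈ G.neighborFinset x, ν y z
        = (b ℓ (i - 1) : ℝ) * S (i - 1) + (c ℓ (i + 1) : ℝ) * S (i + 1) := by
      have step1 : ∀ x ∈ A i, ∑ z ∈ G.neighborFinset x, ν y z
          = ∑ z : V, if G.Adj x z then ν y z else 0 := by
        intro x _
        rw [SimpleGraph.neighborFinset_eq_filter, Finset.sum_filter]
      rw [Finset.sum_congr rfl step1, Finset.sum_comm]
      have step2 : ∀ z : V, ∑ x ∈ A i, (if G.Adj x z then ν y z else 0)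
          = (((A i).filter (fun x => G.Adj x z)).card : ℝ) * ν y z := by
        intro z
        rw [← Finset.sum_filter, Finset.sum_const, nsmul_eq_mul]
      rw [Finset.sum_congr rfl (fun z _ => step2 z)]
      have step3 : ∀ z : V, (((A i).filter (fun x => G.Adj x z)).card : ℝ) * ν y z
          = (if G.dist y z = i - 1 then (b ℓ (i - 1) : ℝ) * ν y z else 0)
            + (if G.dist y z = i + 1 then (c ℓ (i + 1) : ℝ) * ν y z else 0) := by
        intro z
        by_cases h1 : G.dist y z = i - 1
        · have hcard : ((A i).filter (fun x => G.Adj x z)).card = b ℓ (i - 1) := by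
            rw [← hb y z (i - 1) h1]
            rw [hA, Finset.filter_filter]
            congr 1
            apply Finset.filter_congr
            intro x _
            have hii : i - 1 + 1 = i := by omega
            rw [hii]
            constructor
            · rintro ⟨h3, h4⟩; exact ⟨h3, h4.symm⟩
            · rintro ⟨h3, h4⟩; exact ⟨h3, h4.symm⟩
          have hne2 : ¬ (G.dist y z = i + 1) := by omega
          rw [hcard, if_pos h1, if_neg hne2, add_zero]
        · by_cases h2 : G.dist y z = i + 1
          · have hcard : ((A i).filter (fun x => G.Adj x z)).card = c ℓ (i + 1) := by
              rw [← hc y z (i + 1) h2]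
              rw [hA, Finset.filter_filter]
              congr 1
              apply Finset.filter_congr
              intro x _
              have hii : i + 1 - 1 = i := by omega
              rw [hii]
              constructor
              · rintro ⟨h3, h4⟩; exact ⟨h3, h4.symm⟩
              · rintro ⟨h3, h4⟩; exact ⟨h3, h4.symm⟩
            rw [hcard, if_neg h1, if_pos h2, zero_add]
          · have hcard : ((A i).filter (fun x => G.Adj x z)).card = 0 := by
              rw [Finset.card_eq_zero, Finset.filter_eq_empty_iff]
              intro x hx ha
              have hd := (hmemA i x).mp hx
              rcases hadjd x z ha with h | h
              · omega
              · omega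
            rw [hcard, if_neg h1, if_neg h2]
            simp
      rw [Finset.sum_congr rfl (fun z _ => step3 z), Finset.sum_add_distrib]
      congr 1
      · rw [← Finset.sum_filter]
        have hfa : Finset.univ.filter (fun z => G.dist y z = i - 1) = A (i - 1) := by
          rw [hA]
        rw [hfa]
        simp only [hS, Finset.mul_sum]
      · rw [← Finset.sum_filter]
        have hfa : Finset.univ.filter (fun z => G.dist y z = i + 1) = A (i + 1) := by
          rw [hA]
        rw [hfa]
        simp only [hS, Finset.mul_sum]
    rw [Finset.sum_sub_distrib, hdegsum, hnbr] at hsum1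
    linarith
  -- downward induction: the "flow" identity
  have hu : ∀ m i, 1 ≤ i → i + m = Dl + 1 →
      (c ℓ i : ℝ) * S i - (b ℓ (i - 1) : ℝ) * S (i - 1)
        = (Fintype.card V : ℝ) - ∑ t ∈ Finset.range i, (kk ℓ t : ℝ) := by
    intro m
    induction m with
    | zero =>
      intro i h1 h2
      obtain rfl : i = Dl + 1 := by omega
      have hi1 : Dl + 1 - 1 = Dl := by omega
      rw [hi1, hStop, bD0]
      have : ∑ t ∈ Finset.range (Dl + 1), (kk ℓ t : ℝ) = (Fintype.card V : ℝ) := by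
        rw [← htot]; push_cast; rfl
      rw [this]
      simp
    | succ m ih =>
      intro i h1 h2
      have hEi := Ei i h1
      have hih := ih (i + 1) (by omega) (by omega)
      have hi1 : i + 1 - 1 = i := by omega
      rw [hi1, Finset.sum_range_succ] at hih
      linarith
  -- edge counting between consecutive levels
  have hedge : ∀ i, 1 ≤ i → kk ℓ i * c ℓ i = kk ℓ (i - 1) * b ℓ (i - 1) := by
    intro i hi
    have lhs : ∑ x ∈ A i, ∑ w ∈ A (i - 1), (if G.Adj x w then 1 else 0)
        = kk ℓ i * c ℓ i := by
      have h1 : ∀ x ∈ A i, ∑ w ∈ A (i - 1), (if G.Adj x w then 1 else 0) = c ℓ i := by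
        intro x hx
        have hd := (hmemA i x).mp hx
        rw [← Finset.card_filter, ← hc y x i hd, hA, Finset.filter_filter]
      rw [Finset.sum_congr rfl h1, Finset.sum_const, hcardA, smul_eq_mul]
    have rhs : ∑ x ∈ A i, ∑ w ∈ A (i - 1), (if G.Adj x w then 1 else 0)
        = kk ℓ (i - 1) * b ℓ (i - 1) := by
      rw [Finset.sum_comm]
      have h1 : ∀ w ∈ A (i - 1), ∑ x ∈ A i, (if G.Adj x w then 1 else 0) = b ℓ (i - 1) := by
        intro w hw
        have hd := (hmemA (i - 1) w).mp hw
        rw [← Finset.card_filter, ← hb y w (i - 1) hd, hA, Finset.filter_filter]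
        congr 1
        apply Finset.filter_congr
        intro x _
        have hii : i - 1 + 1 = i := by omega
        rw [hii]
        constructor
        · rintro ⟨h3, h4⟩; exact ⟨h3, h4.symm⟩
        · rintro ⟨h3, h4⟩; exact ⟨h3, h4.symm⟩
      rw [Finset.sum_congr rfl h1, Finset.sum_const, hcardA, smul_eq_mul]
    rw [← lhs, rhs]
  -- closed formula for S i
  have hSf : ∀ i, i ≤ Dl → S i = (kk ℓ i : ℝ) *
      ∑ j ∈ Finset.Icc 1 i, ((Fintype.card V : ℝ) - ∑ t ∈ Finset.range j, (kk ℓ t : ℝ)) /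
        ((kk ℓ j : ℝ) * (c ℓ j : ℝ)) := by
    intro i
    induction i with
    | zero =>
      intro _
      have hA0 : A 0 = {y} := by
        ext x
        simp only [hmemA, Finset.mem_singleton]
        rw [hconn.dist_eq_zero_iff]
        exact ⟨fun h => h.symm, fun h => h.symm⟩
      have hS0 : S 0 = 0 := by
        simp only [hS]
        rw [hA0]
        simp [hν0]
      rw [hS0]
      simp
    | succ i ih =>
      intro hle
      have hi : i ≤ Dl := by omega
      have hSi := ih hi
      have hu' := hu (Dl - i) (i + 1) (by omega) (by omega)
      have hi1 : i + 1 - 1 = i := by omega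
      rw [hi1] at hu'
      have hedge' := hedge (i + 1) (by omega)
      rw [hi1] at hedge'
      have hc1 : 1 ≤ c ℓ (i + 1) := cpos (i + 1) (by omega) hle
      have hk1 : 1 ≤ kk ℓ (i + 1) := kkpos (i + 1) hle
      have hcne : ((c ℓ (i + 1) : ℕ) : ℝ) ≠ 0 := Nat.cast_ne_zero.mpr (by omega)
      have hkne : ((kk ℓ (i + 1) : ℕ) : ℝ) ≠ 0 := Nat.cast_ne_zero.mpr (by omega)
      have hedgeR : ((kk ℓ (i + 1) : ℕ) : ℝ) * ((c ℓ (i + 1) : ℕ) : ℝ)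
          = ((kk ℓ i : ℕ) : ℝ) * ((b ℓ i : ℕ) : ℝ) := by exact_mod_cast hedge'
      rw [Finset.sum_Icc_succ_top (by omega : 1 ≤ i + 1)]
      apply mul_left_cancel₀ hcne
      rw [hSi] at hu'
      set F := ∑ j ∈ Finset.Icc 1 i,
        ((Fintype.card V : ℝ) - ∑ t ∈ Finset.range j, (kk ℓ t : ℝ)) /
          ((kk ℓ j : ℝ) * (c ℓ j : ℝ)) with hF
      set KB := (Fintype.card V : ℝ) - ∑ t ∈ Finset.range (i + 1), (kk ℓ t : ℝ) with hKB
      have e1 : ((c ℓ (i + 1) : ℕ) : ℝ) * (((kk ℓ (i + 1) : ℕ) : ℝ) *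
          (F + KB / ((kk ℓ (i + 1) : ℝ) * (c ℓ (i + 1) : ℝ))))
          = ((kk ℓ (i + 1) : ℕ) : ℝ) * ((c ℓ (i + 1) : ℕ) : ℝ) * F + KB := by
        field_simp
      rw [e1, hedgeR]
      linarith
  -- final assembly
  have hmap : ∀ x ∈ (Finset.univ : Finset V), G.dist y x ∈ Finset.range (Dl + 1) := by
    intro x _
    have := hDub y x
    rw [← hℓ] at this
    simp
    omega
  have hsplitall : ∑ x : V, ν y x = ∑ i ∈ Finset.range (Dl + 1), S i := by
    rw [← Finset.sum_fiberwise_of_maps_to hmap (ν y)]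
  rw [hsplitall]
  have hrepl : ∀ i ∈ Finset.range (Dl + 1), S i = ∑ j ∈ Finset.Icc 1 i,
      (kk ℓ i : ℝ) * (((Fintype.card V : ℝ) - ∑ t ∈ Finset.range j, (kk ℓ t : ℝ)) /
        ((kk ℓ j : ℝ) * (c ℓ j : ℝ))) := by
    intro i hi
    rw [hSf i (by simp at hi; omega), Finset.mul_sum]
  rw [Finset.sum_congr rfl hrepl]
  rw [Finset.sum_comm' (t' := Finset.Icc 1 Dl) (s' := fun j => Finset.Icc j Dl)
    (by intro i j; simp only [Finset.mem_range, Finset.mem_Icc]; omega)]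
  refine Finset.sum_congr rfl fun j hj => ?_
  have hjmem : 1 ≤ j ∧ j ≤ Dl := by simpa using hj
  rw [← Finset.sum_mul]
  have hIcc : Finset.Icc j Dl = Finset.Ico j (Dl + 1) := (Finset.Ico_add_one_right_eq_Icc j Dl).symm
  have hKBj : ∑ i ∈ Finset.Icc j Dl, (kk ℓ i : ℝ)
      = (Fintype.card V : ℝ) - ∑ t ∈ Finset.range j, (kk ℓ t : ℝ) := by
    rw [hIcc]
    have h1 := Finset.sum_Ico_consecutive (fun t => (kk ℓ t : ℝ))
      (Nat.zero_le j) (by omega : j ≤ Dl + 1)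
    have h2 : ∑ t ∈ Finset.range (Dl + 1), (kk ℓ t : ℝ) = (Fintype.card V : ℝ) := by
      rw [← htot]; push_cast; rfl
    rw [Finset.range_eq_Ico] at h2
    rw [Finset.range_eq_Ico]
    linarith
  rw [hKBj]
  ring
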